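/- Let S be a linear schema containing a label l, let ρl be an executable prefix of a terminating path through S, let V be a set of variables and let S' be a quotient of S containing l. Then S' is a (ρl,V)-path-faithful dynamic slice of S if and only if M[ρ]_e(v) = M[proj_{S'}(ρ)]_e(v) for every v ∈ V, and every expression p(t) = X which is a consequence of proj_{S'}(ρ) is also a consequence of ρ. -/

import Mathlib

namespace SchemaSlicing

/- Function symbols, predicate symbols, variables and labels are drawn from
   fixed infinite sets; we model each by ℕ. Arities are implicit: each
   occurrence of a symbol carries the list of its arguments. -/
abbrev Var := ℕ
abbrev Fn := ℕ
abbrev Pn := ℕ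
abbrev Label := ℕ

/-- Structured program schemas. `loop` is the while-construct. -/
inductive Schema : Type where
  | skip : Schema
  | label : Label → Schema
  | assign : Var → Fn → List Var → Schema
  | seq : Schema → Schema → Schema
  | ite : Pn → List Var → Schema → Schema → Schema
  | loop : Pn → List Var → Schema → Schema
  deriving DecidableEq

/-- Letters of the alphabet L(S): labels, assignment letters ⟨y:=f(x)⟩ and
    predicate letters ⟨p(x),Z⟩. -/
inductive Letter : Type where
  | lab : Label → Letter
  | asgn : Var → Fn → List Var → Letter
  | pred : Pn → List Var → Bool → Letter
  deriving DecidableEq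

/-- Symbols: function symbols, predicate symbols and labels. -/
inductive Sym : Type where
  | fn : Fn → Sym
  | pn : Pn → Sym
  | lab : Label → Sym
  deriving DecidableEq

/-- The list of occurrences of function symbols, predicate symbols and labels in a schema. -/
def Schema.syms : Schema → List Sym
  | .skip => []
  | .label l => [Sym.lab l]
  | .assign _ f _ => [Sym.fn f]
  | .seq S₁ S₂ => S₁.syms ++ S₂.syms
  | .ite p _ S₁ S₂ => Sym.pn p :: (S₁.syms ++ S₂.syms)
  | .loop q _ T => Sym.pn q :: T.syms

/-- A schema is linear if no function symbol, predicate symbol or label occurs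
    more than once in it. -/
def Schema.Linear (S : Schema) : Prop := S.syms.Nodup

/-- Π(S), the set of terminating paths through S. -/
inductive Paths : Schema → List Letter → Prop where
  | skip : Paths Schema.skip []
  | label (l : Label) : Paths (Schema.label l) [Letter.lab l]
  | assign (y : Var) (f : Fn) (xs : List Var) :
      Paths (Schema.assign y f xs) [Letter.asgn y f xs]
  | seq {S₁ S₂ w₁ w₂} : Paths S₁ w₁ → Paths S₂ w₂ → Paths (Schema.seq S₁ S₂) (w₁ ++ w₂)
  | iteTrue {p xs S₁ S₂ w} : Paths S₁ w →
      Paths (Schema.ite p xs S₁ S₂) (Letter.pred p xs true :: w)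
  | iteFalse {p xs S₁ S₂ w} : Paths S₂ w →
      Paths (Schema.ite p xs S₁ S₂) (Letter.pred p xs false :: w)
  | loopFalse (q : Pn) (xs : List Var) (T : Schema) :
      Paths (Schema.loop q xs T) [Letter.pred q xs false]
  | loopTrue {q xs T w ws} : Paths T w → Paths (Schema.loop q xs T) ws →
      Paths (Schema.loop q xs T) (Letter.pred q xs true :: (w ++ ws))

/-- ρ ∈ pre(Π(S)): ρ is a (finite) path through S.  (Every finite path through S,
    including every finite prefix of an infinite path, is a prefix of a terminating path.) -/
def PathPrefix (S : Schema) (ρ : List Letter) : Prop := ∃ τ, Paths S τ ∧ ρ <+: τ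

/-- `IsQuotient S' S`: S' is obtained from S by deleting zero or more statements. -/
inductive IsQuotient : Schema → Schema → Prop where
  | skip (S : Schema) : IsQuotient Schema.skip S
  | refl (S : Schema) : IsQuotient S S
  | seq {S₁' S₁ S₂' S₂} : IsQuotient S₁' S₁ → IsQuotient S₂' S₂ →
      IsQuotient (Schema.seq S₁' S₂') (Schema.seq S₁ S₂)
  | loop {q xs T' T} : IsQuotient T' T → IsQuotient (Schema.loop q xs T') (Schema.loop q xs T)
  | ite {p xs T₁ S₁ T₂ S₂} : IsQuotient T₁ S₁ → IsQuotient T₂ S₂ →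
      IsQuotient (Schema.ite p xs T₁ T₂) (Schema.ite p xs S₁ S₂)

/-- The symbol (function symbol, predicate symbol or label) of a letter. -/
def Letter.sym : Letter → Sym
  | .lab l => Sym.lab l
  | .asgn _ f _ => Sym.fn f
  | .pred p _ _ => Sym.pn p

/-- proj_{S'}(ρ): delete from ρ all letters whose function or predicate symbols,
    or labels, do not occur in S'. -/
def proj (S' : Schema) (ρ : List Letter) : List Letter :=
  ρ.filter (fun m => decide (m.sym ∈ S'.syms))

/-- An interpretation over a domain D. -/
structure Interp (D : Type) where
  fn : Fn → List D → D
  pn : Pn → List D → Bool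

/-- One execution step on (non-⊥) states; predicate letters and labels do not change the state. -/
def execLetter {D : Type} (i : Interp D) (d : Var → D) : Letter → (Var → D)
  | .asgn y f xs => Function.update d y (i.fn f (xs.map d))
  | _ => d

/-- M[schema(σ)]^i_d : the state after executing the assignments of the word σ from d. -/
def execWord {D : Type} (i : Interp D) (d : Var → D) (σ : List Letter) : Var → D :=
  σ.foldl (execLetter i) d

/-- ρ is consistent with (i,d): every predicate letter in ρ is evaluated by i in accordance
    with the sequence of assignments preceding it. -/
def Consistent {D : Type} (i : Interp D) (d : Var → D) (ρ : List Letter) : Prop :=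
  ∀ σ p xs Z, (σ ++ [Letter.pred p xs Z]) <+: ρ → i.pn p (xs.map (execWord i d σ)) = Z

/-- `ρ` is a finite prefix of the path π(S,i,d). -/
def PrefixOfPi {D : Type} (i : Interp D) (d : Var → D) (S : Schema) (ρ : List Letter) : Prop :=
  PathPrefix S ρ ∧ Consistent i d ρ

/-- The set of finite prefixes of π(S,i,d); this set determines the
    (possibly infinite) word π(S,i,d) uniquely. -/
def PiPrefixes {D : Type} (i : Interp D) (d : Var → D) (S : Schema) : Set (List Letter) :=
  {ρ | PrefixOfPi i d S ρ}

open Classical in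
/-- The final state M[S]^i_d; `none` represents ⊥ (non-termination). -/
noncomputable def finalState {D : Type} (i : Interp D) (d : Var → D) (S : Schema) :
    Option (Var → D) :=
  if h : ∃ ρ, Paths S ρ ∧ Consistent i d ρ then some (execWord i d h.choose) else none

/-- The Herbrand domain Term(F,V). -/
inductive Tm : Type where
  | var : Var → Tm
  | app : Fn → List Tm → Tm

/-- A Herbrand interpretation: function symbols act as term constructors. -/
def Interp.IsHerbrand (j : Interp Tm) : Prop := ∀ f ts, j.fn f ts = Tm.app f ts

/-- The natural state e. -/
def natState : Var → Tm := Tm.var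

/-- A fixed Herbrand interpretation (the predicate part is irrelevant for executing
    assignments). -/
def hInterp : Interp Tm := ⟨fun f ts => Tm.app f ts, fun _ _ => true⟩

/-- M[σ]_e : the Herbrand state after executing the assignments of σ from the natural state. -/
def hExec (σ : List Letter) : Var → Tm := execWord hInterp natState σ

/-- p(t) = Y is a consequence of μ. -/
def Consequence (μ : List Letter) (p : Pn) (ts : List Tm) (Y : Bool) : Prop :=
  ∃ μ' xs, (μ' ++ [Letter.pred p xs Y]) <+: μ ∧ xs.map (hExec μ') = ts

/-- ρ is executable: ρ is a prefix of π(S,i,d) for some domain, interpretation and state. -/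
def Executable (S : Schema) (ρ : List Letter) : Prop :=
  ∃ (D : Type) (i : Interp D) (d : Var → D), PrefixOfPi i d S ρ

/-- ρ (through S) and ρ' (through S') are compatible: for some domain, interpretation i
    and state d they are prefixes of π(S,i,d) and π(S',i,d) respectively. -/
def Compatible (S : Schema) (ρ : List Letter) (S' : Schema) (ρ' : List Letter) : Prop :=
  ∃ (D : Type) (i : Interp D) (d : Var → D), PrefixOfPi i d S ρ ∧ PrefixOfPi i d S' ρ'

/-- `Sub T S`: T occurs as a subschema of S. -/
inductive Sub : Schema → Schema → Prop where
  | refl (S : Schema) : Sub S S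
  | seqL {T S₁ S₂} : Sub T S₁ → Sub T (Schema.seq S₁ S₂)
  | seqR {T S₁ S₂} : Sub T S₂ → Sub T (Schema.seq S₁ S₂)
  | iteT {T p xs S₁ S₂} : Sub T S₁ → Sub T (Schema.ite p xs S₁ S₂)
  | iteF {T p xs S₁ S₂} : Sub T S₂ → Sub T (Schema.ite p xs S₁ S₂)
  | loop {T q xs B} : Sub T B → Sub T (Schema.loop q xs B)

/-- Simple l-reductions of paths through S. -/
inductive SimpleRed (S : Schema) (l : Label) : List Letter → List Letter → Prop where
  | loopRed {p xs B σ α γ} :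
      Sub (Schema.loop p xs B) S → Paths B σ → Sym.lab l ∉ B.syms →
      SimpleRed S l (α ++ [Letter.pred p xs true] ++ σ ++ [Letter.pred p xs false] ++ γ)
                    (α ++ [Letter.pred p xs false] ++ γ)
  | iteRed {p xs S₁ S₂ σ α γ} {Z : Bool} :
      Sub (Schema.ite p xs S₁ S₂) S → Paths (if Z then S₁ else S₂) σ →
      (if Z then S₂ else S₁) = Schema.skip →
      Sym.lab l ∉ S₁.syms → Sym.lab l ∉ S₂.syms →
      SimpleRed S l (α ++ [Letter.pred p xs Z] ++ σ ++ γ)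
                    (α ++ [Letter.pred p xs (!Z)] ++ γ)

/-- ρ is l-reducible to ρ': zero or more simple l-reductions. -/
def Reducible (S : Schema) (l : Label) : List Letter → List Letter → Prop :=
  Relation.ReflTransGen (SimpleRed S l)

/-- maxpre(σ,σ') : the maximal common prefix of two words. -/
def maxpre : List Letter → List Letter → List Letter
  | a :: as, b :: bs => if a = b then a :: maxpre as bs else []
  | _, _ => []

/-- The sequence of function and predicate symbols through which a path passes. -/
def symSeq (ρ : List Letter) : List Sym :=
  ρ.filterMap fun m => match m with
    | Letter.asgn _ f _ => some (Sym.fn f)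
    | Letter.pred p _ _ => some (Sym.pn p)
    | Letter.lab _ => none

/-- S' (a quotient of S containing l) is a (ρl,V)-path-faithful dynamic slice of S:
    (1) every variable of V defines the same term after proj_{S'}(ρ) as after ρ, and
    (2) every maximal path through S' compatible with ρ has proj_{S'}(ρ) as a prefix
        (equivalently: whenever ρ is a prefix of π(S,i,d), proj_{S'}(ρ) is a prefix
        of π(S',i,d)). -/
def IsPFDS (S : Schema) (ρ : List Letter) (l : Label) (V : Set Var) (S' : Schema) : Prop :=
  (∀ v ∈ V, hExec (proj S' ρ) v = hExec ρ v) ∧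
  ∀ (D : Type) (i : Interp D) (d : Var → D),
    PrefixOfPi i d S ρ → PrefixOfPi i d S' (proj S' ρ)

/-- S' (a quotient of S containing l) is a (ρl,V)-dynamic slice of S: every maximal path
    through S' compatible with ρ has a prefix ρ' to which proj_{S'}(ρ) is l-reducible and
    such that every variable of V defines the same term after ρ' as after ρ. -/
def IsDS (S : Schema) (ρ : List Letter) (l : Label) (V : Set Var) (S' : Schema) : Prop :=
  ∀ (D : Type) (i : Interp D) (d : Var → D), PrefixOfPi i d S ρ →
    ∃ ρ', PrefixOfPi i d S' ρ' ∧ Reducible S' l (proj S' ρ) ρ' ∧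
      ∀ v ∈ V, hExec ρ' v = hExec ρ v

/-- T' is a (ρ,V)-path-faithful dynamic end slice of T
    (S = T l with a label l at the end, S' = T' l). -/
def IsPFDSEnd (T : Schema) (ρ : List Letter) (V : Set Var) (T' : Schema) : Prop :=
  IsPFDS (Schema.seq T (Schema.label 0)) ρ 0 V (Schema.seq T' (Schema.label 0))

/-- T' is a (ρ,V)-dynamic end slice of T. -/
def IsDSEnd (T : Schema) (ρ : List Letter) (V : Set Var) (T' : Schema) : Prop :=
  IsDS (Schema.seq T (Schema.label 0)) ρ 0 V (Schema.seq T' (Schema.label 0))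

/-- The set of function and predicate symbols of a schema. -/
def fpsyms (T : Schema) : Set Sym := {s | s ∈ T.syms ∧ ∀ l : Label, s ≠ Sym.lab l}

/-- T is a minimal (ρ,V)-path-faithful dynamic end slice of S: it is a path-faithful
    dynamic end slice, and no quotient of S with a strictly smaller set of function and
    predicate symbols is a (ρ,V)-dynamic end slice of S. -/
def MinimalPFDSEnd (S : Schema) (ρ : List Letter) (V : Set Var) (T : Schema) : Prop :=
  IsPFDSEnd S ρ V T ∧
  ∀ T', IsQuotient T' S → fpsyms T' ⊂ fpsyms T → ¬ IsDSEnd S ρ V T'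

/-! ### Auxiliary lemmas -/

lemma execWord_cons {D : Type} (i : Interp D) (d : Var → D) (m : Letter) (σ : List Letter) :
    execWord i d (m :: σ) = execWord i (execLetter i d m) σ := rfl

lemma execWord_fn_eq {D : Type} {i i' : Interp D} (h : i.fn = i'.fn) :
    ∀ (σ : List Letter) (d : Var → D), execWord i d σ = execWord i' d σ := by
  intro σ
  induction σ with
  | nil => intro d; rfl
  | cons m σ ih =>
    intro d
    rw [execWord_cons, execWord_cons, ih]
    congr 1
    cases m with
    | asgn y f xs => simp [execLetter, h]
    | lab => rfl
    | pred => rfl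

/-- Evaluation of a Herbrand term in a domain D. -/
def evalTm {D : Type} (i : Interp D) (d : Var → D) : Tm → D
  | .var v => d v
  | .app f ts => i.fn f (ts.attach.map (fun t => evalTm i d t.1))
  decreasing_by
    have h := List.sizeOf_lt_of_mem t.2
    simp only [Tm.app.sizeOf_spec] at *
    omega

lemma evalTm_var {D : Type} (i : Interp D) (d : Var → D) (v : Var) :
    evalTm i d (Tm.var v) = d v := by rw [evalTm]

lemma evalTm_app {D : Type} (i : Interp D) (d : Var → D) (f : Fn) (ts : List Tm) :
    evalTm i d (Tm.app f ts) = i.fn f (ts.map (evalTm i d)) := by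
  rw [evalTm]
  congr 1
  simp

/-- The homomorphism lemma: executing over D agrees with evaluating the Herbrand execution. -/
lemma evalTm_execWord {D : Type} (i : Interp D) (d : Var → D) :
    ∀ (σ : List Letter) (e' : Var → Tm),
      (fun x => evalTm i d (execWord hInterp e' σ x)) =
        execWord i (fun x => evalTm i d (e' x)) σ := by
  intro σ
  induction σ with
  | nil => intro e'; rfl
  | cons m σ ih =>
    intro e'
    rw [execWord_cons, execWord_cons, ih (execLetter hInterp e' m)]
    have hfun : (fun x => evalTm i d (execLetter hInterp e' m x)) =
        execLetter i (fun x => evalTm i d (e' x)) m := by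
      cases m with
      | lab => rfl
      | pred => rfl
      | asgn y f xs =>
        funext x
        simp only [execLetter]
        by_cases hx : x = y
        · subst hx
          simp [Function.update, hInterp, evalTm_app, Function.comp]
          rfl
        · simp [Function.update, hx]
    rw [hfun]

lemma evalTm_hExec {D : Type} (i : Interp D) (d : Var → D) (σ : List Letter) (x : Var) :
    evalTm i d (hExec σ x) = execWord i d σ x := by
  have := congrFun (evalTm_execWord i d σ natState) x
  simpa [hExec, natState, evalTm_var] using this

/-- Consequences of an executable path are functional. -/
lemma conseq_functional {S : Schema} {ρ : List Letter} {l : Label}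
    (hexec : Executable S (ρ ++ [Letter.lab l])) {p : Pn} {ts : List Tm} :
    ¬ (Consequence ρ p ts true ∧ Consequence ρ p ts false) := by
  rintro ⟨⟨σ₁, xs₁, hpre₁, hts₁⟩, ⟨σ₂, xs₂, hpre₂, hts₂⟩⟩
  obtain ⟨D, i, d, _, hcons⟩ := hexec
  have h₁ := hcons σ₁ p xs₁ true (hpre₁.trans (List.prefix_append ρ _))
  have h₂ := hcons σ₂ p xs₂ false (hpre₂.trans (List.prefix_append ρ _))
  have e₁ : xs₁.map (execWord i d σ₁) = ts.map (evalTm i d) := by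
    rw [← hts₁, List.map_map]
    exact List.map_congr_left (fun x _ => (evalTm_hExec i d σ₁ x).symm)
  have e₂ : xs₂.map (execWord i d σ₂) = ts.map (evalTm i d) := by
    rw [← hts₂, List.map_map]
    exact List.map_congr_left (fun x _ => (evalTm_hExec i d σ₂ x).symm)
  rw [e₁] at h₁; rw [e₂] at h₂
  rw [h₁] at h₂
  exact Bool.noConfusion h₂

/-- Every letter of a path through S has its symbol in S. -/
lemma paths_syms {S : Schema} {τ : List Letter} (h : Paths S τ) :
    ∀ m ∈ τ, m.sym ∈ S.syms := by
  induction h with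
  | skip => simp
  | label l => simp [Letter.sym, Schema.syms]
  | assign y f xs => simp [Letter.sym, Schema.syms]
  | seq h₁ h₂ ih₁ ih₂ =>
    intro m hm
    simp only [List.mem_append] at hm
    simp only [Schema.syms, List.mem_append]
    exact hm.elim (fun h => Or.inl (ih₁ m h)) (fun h => Or.inr (ih₂ m h))
  | iteTrue h ih =>
    intro m hm
    simp only [Schema.syms, List.mem_cons, List.mem_append]
    rcases List.mem_cons.mp hm with h' | h'
    · subst h'; left; rfl
    · right; left; exact ih m h'
  | iteFalse h ih =>
    intro m hm
    simp only [Schema.syms, List.mem_cons, List.mem_append]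
    rcases List.mem_cons.mp hm with h' | h'
    · subst h'; left; rfl
    · right; right; exact ih m h'
  | loopFalse q xs T =>
    intro m hm
    simp only [List.mem_singleton] at hm
    subst hm
    simp [Letter.sym, Schema.syms]
  | loopTrue h₁ h₂ ih₁ ih₂ =>
    intro m hm
    simp only [Schema.syms, List.mem_cons]
    rcases List.mem_cons.mp hm with h' | h'
    · subst h'; left; rfl
    · rcases List.mem_append.mp h' with h'' | h''
      · right; exact ih₁ m h''
      · have := ih₂ m h''
        simpa [Schema.syms] using this

/-- The symbols of a quotient are among those of the original. -/
lemma quotient_syms {S' S : Schema} (h : IsQuotient S' S) : ∀ s ∈ S'.syms, s ∈ S.syms := by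
  induction h with
  | skip S => simp [Schema.syms]
  | refl S => intro s hs; exact hs
  | seq h₁ h₂ ih₁ ih₂ =>
    intro s hs
    simp only [Schema.syms, List.mem_append] at hs ⊢
    exact hs.elim (fun h => Or.inl (ih₁ s h)) (fun h => Or.inr (ih₂ s h))
  | loop h ih =>
    intro s hs
    simp only [Schema.syms, List.mem_cons] at hs ⊢
    exact hs.elim Or.inl (fun h => Or.inr (ih s h))
  | ite h₁ h₂ ih₁ ih₂ =>
    intro s hs
    simp only [Schema.syms, List.mem_cons, List.mem_append] at hs ⊢
    rcases hs with h | h | h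
    · exact Or.inl h
    · exact Or.inr (Or.inl (ih₁ s h))
    · exact Or.inr (Or.inr (ih₂ s h))

lemma proj_eq_self {S : Schema} {τ : List Letter} (h : ∀ m ∈ τ, m.sym ∈ S.syms) :
    proj S τ = τ := by
  unfold proj
  rw [List.filter_eq_self]
  intro m hm
  simpa using h m hm

/-- Key combinatorial lemma: the projection of a path through a linear schema onto
    a quotient is a path through the quotient. -/
lemma paths_proj {S : Schema} {τ : List Letter} (hτ : Paths S τ) :
    ∀ {S' : Schema}, IsQuotient S' S → S.Linear → Paths S' (proj S' τ) := by
  induction hτ with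
  | skip =>
    intro S' hq _
    cases hq <;> exact Paths.skip
  | label l =>
    intro S' hq _
    cases hq with
    | skip => simpa [proj, Schema.syms] using Paths.skip
    | refl => simpa [proj, Schema.syms, Letter.sym] using Paths.label l
  | assign y f xs =>
    intro S' hq _
    cases hq with
    | skip => simpa [proj, Schema.syms] using Paths.skip
    | refl => simpa [proj, Schema.syms, Letter.sym] using Paths.assign y f xs
  | @seq S₁ S₂ w₁ w₂ h₁ h₂ ih₁ ih₂ =>
    intro S' hq hlin
    have hlin' : (S₁.syms ++ S₂.syms).Nodup := hlin
    obtain ⟨hn₁, hn₂, hdisj⟩ := List.nodup_append.mp hlin'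
    cases hq with
    | skip => simp [proj, Schema.syms, Paths.skip]
    | refl =>
      rw [proj_eq_self (paths_syms (Paths.seq h₁ h₂))]
      exact Paths.seq h₁ h₂
    | @seq S₁' _ S₂' _ hq₁ hq₂ =>
      have key : proj (Schema.seq S₁' S₂') (w₁ ++ w₂) =
          proj S₁' w₁ ++ proj S₂' w₂ := by
        unfold proj
        rw [List.filter_append]
        congr 1
        · apply List.filter_congr
          intro m hm
          have hmem : m.sym ∈ S₁.syms := paths_syms h₁ m hm
          have : (m.sym ∈ (Schema.seq S₁' S₂').syms) ↔ (m.sym ∈ S₁'.syms) := by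
            simp only [Schema.syms, List.mem_append]
            constructor
            · rintro (h | h)
              · exact h
              · exact absurd (quotient_syms hq₂ _ h) (fun h' => hdisj _ hmem _ h' rfl)
            · exact Or.inl
          simp [this]
        · apply List.filter_congr
          intro m hm
          have hmem : m.sym ∈ S₂.syms := paths_syms h₂ m hm
          have : (m.sym ∈ (Schema.seq S₁' S₂').syms) ↔ (m.sym ∈ S₂'.syms) := by
            simp only [Schema.syms, List.mem_append]
            constructor
            · rintro (h | h)
              · exact absurd (quotient_syms hq₁ _ h) (fun h' => hdisj _ h' _ hmem rfl)
              · exact h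
            · exact Or.inr
          simp [this]
      rw [key]
      exact Paths.seq (ih₁ hq₁ hn₁) (ih₂ hq₂ hn₂)
  | @iteTrue p xs S₁ S₂ w h ih =>
    intro S' hq hlin
    have hlin' : (Sym.pn p :: (S₁.syms ++ S₂.syms)).Nodup := hlin
    obtain ⟨hp, hrest⟩ := List.nodup_cons.mp hlin'
    obtain ⟨hn₁, hn₂, hdisj⟩ := List.nodup_append.mp hrest
    cases hq with
    | skip => simp [proj, Schema.syms, Paths.skip]
    | refl =>
      rw [proj_eq_self (paths_syms (Paths.iteTrue h))]
      exact Paths.iteTrue h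
    | @ite _ _ T₁ _ T₂ _ hq₁ hq₂ =>
      have key : proj (Schema.ite p xs T₁ T₂) (Letter.pred p xs true :: w) =
          Letter.pred p xs true :: proj T₁ w := by
        unfold proj
        rw [List.filter_cons]
        have hhead : (Letter.pred p xs true).sym ∈ (Schema.ite p xs T₁ T₂).syms := by
          simp [Letter.sym, Schema.syms]
        rw [if_pos (by simpa using hhead)]
        congr 1
        apply List.filter_congr
        intro m hm
        have hmem : m.sym ∈ S₁.syms := paths_syms h m hm
        have : (m.sym ∈ (Schema.ite p xs T₁ T₂).syms) ↔ (m.sym ∈ T₁.syms) := by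
          simp only [Schema.syms, List.mem_cons, List.mem_append]
          constructor
          · rintro (h' | h' | h')
            · exact absurd hmem (h' ▸ (fun hc => hp (List.mem_append.mpr (Or.inl hc))))
            · exact h'
            · exact absurd (quotient_syms hq₂ _ h') (fun h'' => hdisj _ hmem _ h'' rfl)
          · exact fun h' => Or.inr (Or.inl h')
        simp [this]
      rw [key]
      exact Paths.iteTrue (ih hq₁ hn₁)
  | @iteFalse p xs S₁ S₂ w h ih =>
    intro S' hq hlin
    have hlin' : (Sym.pn p :: (S₁.syms ++ S₂.syms)).Nodup := hlin
    obtain ⟨hp, hrest⟩ := List.nodup_cons.mp hlin'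
    obtain ⟨hn₁, hn₂, hdisj⟩ := List.nodup_append.mp hrest
    cases hq with
    | skip => simp [proj, Schema.syms, Paths.skip]
    | refl =>
      rw [proj_eq_self (paths_syms (Paths.iteFalse h))]
      exact Paths.iteFalse h
    | @ite _ _ T₁ _ T₂ _ hq₁ hq₂ =>
      have key : proj (Schema.ite p xs T₁ T₂) (Letter.pred p xs false :: w) =
          Letter.pred p xs false :: proj T₂ w := by
        unfold proj
        rw [List.filter_cons]
        have hhead : (Letter.pred p xs false).sym ∈ (Schema.ite p xs T₁ T₂).syms := by
          simp [Letter.sym, Schema.syms]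
        rw [if_pos (by simpa using hhead)]
        congr 1
        apply List.filter_congr
        intro m hm
        have hmem : m.sym ∈ S₂.syms := paths_syms h m hm
        have : (m.sym ∈ (Schema.ite p xs T₁ T₂).syms) ↔ (m.sym ∈ T₂.syms) := by
          simp only [Schema.syms, List.mem_cons, List.mem_append]
          constructor
          · rintro (h' | h' | h')
            · exact absurd hmem (h' ▸ (fun hc => hp (List.mem_append.mpr (Or.inr hc))))
            · exact absurd (quotient_syms hq₁ _ h') (fun h'' => hdisj _ h'' _ hmem rfl)
            · exact h'
          · exact fun h' => Or.inr (Or.inr h')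
        simp [this]
      rw [key]
      exact Paths.iteFalse (ih hq₂ hn₂)
  | loopFalse q xs T =>
    intro S' hq _
    cases hq with
    | skip => simpa [proj, Schema.syms] using Paths.skip
    | refl =>
      rw [proj_eq_self (paths_syms (Paths.loopFalse q xs T))]
      exact Paths.loopFalse q xs T
    | @loop _ _ T' _ hq' =>
      have : proj (Schema.loop q xs T') [Letter.pred q xs false] =
          [Letter.pred q xs false] := by
        simp [proj, Schema.syms, Letter.sym]
      rw [this]
      exact Paths.loopFalse q xs T'
  | @loopTrue q xs T w ws h₁ h₂ ih₁ ih₂ =>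
    intro S' hq hlin
    have hlin' : (Sym.pn q :: T.syms).Nodup := hlin
    obtain ⟨hqT, hnT⟩ := List.nodup_cons.mp hlin'
    cases hq with
    | skip => simp [proj, Schema.syms, Paths.skip]
    | refl =>
      rw [proj_eq_self (paths_syms (Paths.loopTrue h₁ h₂))]
      exact Paths.loopTrue h₁ h₂
    | @loop _ _ T' _ hq' =>
      have key : proj (Schema.loop q xs T') (Letter.pred q xs true :: (w ++ ws)) =
          Letter.pred q xs true ::
            (proj T' w ++ proj (Schema.loop q xs T') ws) := by
        unfold proj
        rw [List.filter_cons]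
        have hhead : (Letter.pred q xs true).sym ∈ (Schema.loop q xs T').syms := by
          simp [Letter.sym, Schema.syms]
        rw [if_pos (by simpa using hhead), List.filter_append]
        congr 2
        apply List.filter_congr
        intro m hm
        have hmem : m.sym ∈ T.syms := paths_syms h₁ m hm
        have : (m.sym ∈ (Schema.loop q xs T').syms) ↔ (m.sym ∈ T'.syms) := by
          simp only [Schema.syms, List.mem_cons]
          constructor
          · rintro (h' | h')
            · exact absurd hmem (h' ▸ hqT)
            · exact h'
          · exact Or.inr
        simp [this]
      rw [key]
      exact Paths.loopTrue (ih₁ hq' hnT) (ih₂ (IsQuotient.loop hq') hlin')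

open Classical in
/-- An interpretation over the Herbrand domain biased towards value `X`:
    `p(ts)` evaluates to `X` unless this would be inconsistent with `ρ`. -/
noncomputable def biasInterp (ρ : List Letter) (X : Bool) : Interp Tm :=
  ⟨hInterp.fn, fun q us => if Consequence ρ q us X then X else !X⟩

lemma biasInterp_exec (ρ : List Letter) (X : Bool) (σ : List Letter) :
    execWord (biasInterp ρ X) natState σ = hExec σ :=
  execWord_fn_eq (rfl : (biasInterp ρ X).fn = hInterp.fn) σ natState

/-- Theorem 3.2 / dps.verify.thm: S' is a (ρl,V)-path-faithful dynamic
    slice of S iff M[ρ]_e(v) = M[proj_{S'}(ρ)]_e(v) for all v ∈ V and every expression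
    p(t) = X which is a consequence of proj_{S'}(ρ) is also a consequence of ρ. -/
theorem statement_6 (S : Schema) (l : Label) (ρ : List Letter) (V : Set Var) (S' : Schema)
    (hlin : S.Linear) (hlS : Sym.lab l ∈ S.syms)
    (hpath : PathPrefix S (ρ ++ [Letter.lab l]))
    (hexec : Executable S (ρ ++ [Letter.lab l]))
    (hquot : IsQuotient S' S) (hlS' : Sym.lab l ∈ S'.syms) :
    IsPFDS S ρ l V S' ↔
      ((∀ v ∈ V, hExec ρ v = hExec (proj S' ρ) v) ∧
       ∀ (p : Pn) (ts : List Tm) (X : Bool),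
         Consequence (proj S' ρ) p ts X → Consequence ρ p ts X) := by
  classical
  constructor
  · rintro ⟨hvar, hpi⟩
    refine ⟨fun v hv => (hvar v hv).symm, ?_⟩
    rintro p ts X ⟨μ', xs, hpre, hts⟩
    set j := biasInterp ρ X with hj
    have hρpath : PathPrefix S ρ := by
      obtain ⟨τ, hτ, hpref⟩ := hpath
      exact ⟨τ, hτ, (List.prefix_append ρ _).trans hpref⟩
    have hconsρ : Consistent j natState ρ := by
      intro σ q ys Z hpref
      rw [hj, biasInterp_exec]
      have hc' : Consequence ρ q (ys.map (hExec σ)) Z := ⟨σ, ys, hpref, rfl⟩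
      show (if Consequence ρ q (ys.map (hExec σ)) X then X else !X) = Z
      by_cases hZ : Z = X
      · subst hZ; rw [if_pos hc']
      · have hZ' : Z = !X := by cases Z <;> cases X <;> simp_all
        subst hZ'
        rw [if_neg]
        intro hcX
        cases X
        · exact conseq_functional hexec ⟨hc', hcX⟩
        · exact conseq_functional hexec ⟨hcX, hc'⟩
    have hcons' := (hpi Tm j natState ⟨hρpath, hconsρ⟩).2 μ' p xs X hpre
    rw [hj, biasInterp_exec, hts] at hcons'
    have hcons'' : (if Consequence ρ p ts X then X else !X) = X := hcons'
    by_contra hnc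
    rw [if_neg hnc] at hcons''
    cases X <;> simp_all
  · rintro ⟨hvar, hconseq⟩
    refine ⟨fun v hv => (hvar v hv).symm, ?_⟩
    rintro D i d ⟨hpp, hcons⟩
    constructor
    · obtain ⟨τ, hτ, hpref⟩ := hpath
      refine ⟨proj S' τ, paths_proj hτ hquot hlin, ?_⟩
      exact ((List.prefix_append ρ _).trans hpref).filter _
    · intro σ p xs Z hpref
      have hc : Consequence (proj S' ρ) p (xs.map (hExec σ)) Z := ⟨σ, xs, hpref, rfl⟩
      obtain ⟨μ', ys, hpre', hts'⟩ := hconseq p _ Z hc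
      have h := hcons μ' p ys Z hpre'
      have e : ys.map (execWord i d μ') = xs.map (execWord i d σ) := by
        have e1 : ys.map (execWord i d μ') = (ys.map (hExec μ')).map (evalTm i d) := by
          rw [List.map_map]
          exact List.map_congr_left (fun x _ => (evalTm_hExec i d μ' x).symm)
        have e2 : xs.map (execWord i d σ) = (xs.map (hExec σ)).map (evalTm i d) := by
          rw [List.map_map]
          exact List.map_congr_left (fun x _ => (evalTm_hExec i d σ x).symm)
        rw [e1, e2, hts']
      rw [← e]; exact h


end SchemaSlicing
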